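/- Let f : 2^{[n]} → ℝ_{≥0} be a monotone submodular function with multilinear extension F, let x ∈ [0,1]^n and p ∈ [0,1], and let S be a random subset of [n] including each item i independently with probability p·x_i. Then E[f(S)] ≥ p·F(x). -/

import Mathlib

open Finset
open scoped Classical BigOperators

/-- Probability of the subset `T` under the product distribution on subsets of
`Fin n` with marginal probabilities `q`. -/
noncomputable def prodP {n : ℕ} (q : Fin n → ℝ) (T : Finset (Fin n)) : ℝ :=
  (∏ i ∈ T, q i) * ∏ i ∈ Tᶜ, (1 - q i)

/-- Expectation of `g(S)` where `S` is drawn from the product distribution with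
marginals `q`.  In particular `exV x f` is the multilinear extension `F(x)`
of the set function `f`. -/
noncomputable def exV {n : ℕ} (q : Fin n → ℝ) (g : Finset (Fin n) → ℝ) : ℝ :=
  ∑ T : Finset (Fin n), prodP q T * g T

/-- sampling each element of `T` independently with prob `p` loses at most a factor `p`. -/
lemma samp_lemma {n : ℕ} (p : ℝ) (hp0 : 0 ≤ p) (hp1 : p ≤ 1) :
    ∀ (T : Finset (Fin n)) (f : Finset (Fin n) → ℝ),
      (∀ A B, f (A ∪ B) + f (A ∩ B) ≤ f A + f B) →
      p * f T + (1 - p) * f ∅ ≤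
        ∑ R ∈ T.powerset, p ^ R.card * (1 - p) ^ (T \ R).card * f R := by
  intro T
  induction T using Finset.induction_on with
  | empty =>
      intro f _
      simp only [Finset.powerset_empty, Finset.sum_singleton, Finset.card_empty, pow_zero,
        Finset.sdiff_empty]
      have : p * f ∅ + (1 - p) * f ∅ = f ∅ := by ring
      linarith
  | insert a T' ha ih =>
      intro f hsub
      rw [Finset.sum_powerset_insert ha]
      have key : ∀ R ∈ T'.powerset,
          p ^ (insert a R).card * (1 - p) ^ ((insert a T') \ insert a R).card * f (insert a R)
            = p * (p ^ R.card * (1 - p) ^ (T' \ R).card * (fun S => f (insert a S)) R) := by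
        intro R hR
        rw [Finset.mem_powerset] at hR
        have haR : a ∉ R := fun h => ha (hR h)
        have h1 : (insert a R).card = R.card + 1 := Finset.card_insert_of_notMem haR
        have h2 : (insert a T') \ insert a R = T' \ R := by
          ext i
          simp only [Finset.mem_sdiff, Finset.mem_insert]
          constructor
          · rintro ⟨h3 | h3, h4⟩
            · exact absurd (Or.inl h3) h4
            · exact ⟨h3, fun h5 => h4 (Or.inr h5)⟩
          · rintro ⟨h3, h4⟩
            exact ⟨Or.inr h3, fun h5 => h5.elim (fun h6 => ha (h6 ▸ h3)) h4⟩
        rw [h1, h2]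
        ring
      have key2 : ∀ R ∈ T'.powerset,
          p ^ R.card * (1 - p) ^ ((insert a T') \ R).card * f R
            = (1 - p) * (p ^ R.card * (1 - p) ^ (T' \ R).card * f R) := by
        intro R hR
        rw [Finset.mem_powerset] at hR
        have haR : a ∉ R := fun h => ha (hR h)
        have h2 : (insert a T') \ R = insert a (T' \ R) := by
          ext i
          simp only [Finset.mem_sdiff, Finset.mem_insert]
          constructor
          · rintro ⟨h3 | h3, h4⟩
            · exact Or.inl h3
            · exact Or.inr ⟨h3, h4⟩
          · rintro (h3 | ⟨h3, h4⟩)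
            · exact ⟨Or.inl h3, h3 ▸ haR⟩
            · exact ⟨Or.inr h3, h4⟩
        have h3 : a ∉ T' \ R := fun h => ha (Finset.mem_sdiff.mp h).1
        rw [h2, Finset.card_insert_of_notMem h3]
        ring
      rw [Finset.sum_congr rfl key, Finset.sum_congr rfl key2, ← Finset.mul_sum, ← Finset.mul_sum]
      have hsub' : ∀ A B : Finset (Fin n),
          (fun S => f (insert a S)) (A ∪ B) + (fun S => f (insert a S)) (A ∩ B)
            ≤ (fun S => f (insert a S)) A + (fun S => f (insert a S)) B := by
        intro A B
        simp only
        have := hsub (insert a A) (insert a B)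
        have h1 : insert a A ∪ insert a B = insert a (A ∪ B) := by
          ext i; simp [Finset.mem_insert, Finset.mem_union]
        have h2 : insert a A ∩ insert a B = insert a (A ∩ B) := by
          ext i; simp [Finset.mem_insert, Finset.mem_inter]; tauto
        rw [h1, h2] at this
        linarith
      have ih1 := ih f hsub
      have ih2 := ih (fun S => f (insert a S)) hsub'
      have hkey : f (insert a T') + f ∅ ≤ f (insert a ∅) + f T' := by
        have := hsub (insert a ∅) T'
        have h1 : insert a ∅ ∪ T' = insert a T' := by
          ext i; simp [Finset.mem_insert, Finset.mem_union]
        have h2 : insert a ∅ ∩ T' = ∅ := by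
          ext i
          simp only [Finset.mem_inter, Finset.mem_insert, Finset.notMem_empty, iff_false]
          rintro ⟨h3 | h3, h4⟩
          · exact ha (h3 ▸ h4)
          · exact h3
        rw [h1, h2] at this
        linarith
      nlinarith [mul_le_mul_of_nonneg_left hkey (mul_nonneg hp0 (by linarith : (0:ℝ) ≤ 1 - p))]

lemma two_stage {n : ℕ} (p : ℝ) (x : Fin n → ℝ) (f : Finset (Fin n) → ℝ) :
    ∑ T : Finset (Fin n), prodP x T * ∑ R ∈ T.powerset, p ^ R.card * (1 - p) ^ (T \ R).card * f R
      = ∑ R : Finset (Fin n), prodP (fun i => p * x i) R * f R := by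
  have step1 : ∀ T : Finset (Fin n),
      prodP x T * ∑ R ∈ T.powerset, p ^ R.card * (1 - p) ^ (T \ R).card * f R
        = ∑ R : Finset (Fin n),
            if R ⊆ T then prodP x T * (p ^ R.card * (1 - p) ^ (T \ R).card * f R) else 0 := by
    intro T
    rw [Finset.mul_sum]
    have : T.powerset = Finset.univ.filter (fun R => R ⊆ T) := by
      ext R; simp
    rw [this, Finset.sum_filter]
  rw [Finset.sum_congr rfl (fun T _ => step1 T), Finset.sum_comm]
  refine Finset.sum_congr rfl (fun R _ => ?_)
  -- now fix R
  have hfilter : ∑ T : Finset (Fin n),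
      (if R ⊆ T then prodP x T * (p ^ R.card * (1 - p) ^ (T \ R).card * f R) else 0)
      = ∑ T ∈ Finset.univ.filter (fun T => R ⊆ T),
          prodP x T * (p ^ R.card * (1 - p) ^ (T \ R).card * f R) := by
    rw [Finset.sum_filter]
  rw [hfilter]
  have hbij : ∑ T ∈ Finset.univ.filter (fun T => R ⊆ T),
      prodP x T * (p ^ R.card * (1 - p) ^ (T \ R).card * f R)
      = ∑ U ∈ Rᶜ.powerset,
          prodP x (R ∪ U) * (p ^ R.card * (1 - p) ^ U.card * f R) := by
    refine Finset.sum_bij' (fun T _ => T \ R) (fun U _ => R ∪ U) ?_ ?_ ?_ ?_ ?_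
    · intro T hT
      rw [Finset.mem_filter] at hT
      rw [Finset.mem_powerset]
      intro i hi
      rw [Finset.mem_sdiff] at hi
      simp [hi.2]
    · intro U hU
      rw [Finset.mem_powerset] at hU
      rw [Finset.mem_filter]
      exact ⟨Finset.mem_univ _, Finset.subset_union_left⟩
    · intro T hT
      rw [Finset.mem_filter] at hT
      exact Finset.union_sdiff_of_subset hT.2
    · intro U hU
      rw [Finset.mem_powerset] at hU
      apply Finset.union_sdiff_cancel_left
      rw [Finset.disjoint_left]
      intro i hiR hiU
      exact (Finset.mem_compl.mp (hU hiU)) hiR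
    · intro T hT
      rw [Finset.mem_filter] at hT
      rw [Finset.union_sdiff_of_subset hT.2]
  rw [hbij]
  -- now compute the sum over U
  have hdisj : ∀ U ∈ Rᶜ.powerset, Disjoint R U := by
    intro U hU
    rw [Finset.mem_powerset] at hU
    rw [Finset.disjoint_left]
    intro i hiR hiU
    exact (Finset.mem_compl.mp (hU hiU)) hiR
  have hterm : ∀ U ∈ Rᶜ.powerset,
      prodP x (R ∪ U) * (p ^ R.card * (1 - p) ^ U.card * f R)
        = ((p ^ R.card * ∏ i ∈ R, x i) * f R) *
          (((∏ i ∈ U, x i) * (1 - p) ^ U.card) * ∏ i ∈ Rᶜ \ U, (1 - x i)) := by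
    intro U hU
    have hd := hdisj U hU
    rw [Finset.mem_powerset] at hU
    have hc : (R ∪ U)ᶜ = Rᶜ \ U := by
      ext i
      simp only [Finset.mem_compl, Finset.mem_union, Finset.mem_sdiff]
      tauto
    unfold prodP
    rw [Finset.prod_union hd, hc]
    ring
  rw [Finset.sum_congr rfl hterm, ← Finset.mul_sum]
  have hprod : ∑ U ∈ Rᶜ.powerset,
      ((∏ i ∈ U, x i) * (1 - p) ^ U.card) * ∏ i ∈ Rᶜ \ U, (1 - x i)
        = ∏ i ∈ Rᶜ, (1 - p * x i) := by
    have := Finset.prod_add (fun i => x i * (1 - p)) (fun i => 1 - x i) Rᶜ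
    have heq : ∀ i ∈ Rᶜ, x i * (1 - p) + (1 - x i) = 1 - p * x i := by
      intro i _; ring
    rw [Finset.prod_congr rfl heq] at this
    rw [this]
    refine Finset.sum_congr rfl (fun U _ => ?_)
    rw [Finset.prod_mul_distrib, Finset.prod_const]
  rw [hprod]
  unfold prodP
  rw [Finset.prod_mul_distrib, Finset.prod_const]
  ring


/-- for a nonnegative monotone submodular `f` with multilinear
extension `F`, if each item is sampled independently with probability `p·x i`
then `E[f(S)] ≥ p·F(x)`. -/
theorem scaled_sampling_multilinear (n : ℕ) (f : Finset (Fin n) → ℝ)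
    (hmono : ∀ A B : Finset (Fin n), A ⊆ B → f A ≤ f B)
    (hsub : ∀ A B : Finset (Fin n), f (A ∪ B) + f (A ∩ B) ≤ f A + f B)
    (hnn : ∀ A : Finset (Fin n), 0 ≤ f A)
    (x : Fin n → ℝ) (hx : ∀ i, x i ∈ Set.Icc (0:ℝ) 1)
    (p : ℝ) (hp : p ∈ Set.Icc (0:ℝ) 1)
    (q : Fin n → ℝ) (hq : ∀ i, q i = p * x i) :
    exV q f ≥ p * exV x f := by
  obtain ⟨hp0, hp1⟩ := hp
  have hqx : q = fun i => p * x i := funext hq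
  have hts := two_stage p x f
  have hPnn : ∀ T : Finset (Fin n), 0 ≤ prodP x T := by
    intro T
    unfold prodP
    apply mul_nonneg
    · exact Finset.prod_nonneg (fun i _ => (hx i).1)
    · exact Finset.prod_nonneg (fun i _ => by linarith [(hx i).2])
  have hlb : ∀ T : Finset (Fin n),
      p * f T ≤ ∑ R ∈ T.powerset, p ^ R.card * (1 - p) ^ (T \ R).card * f R := by
    intro T
    have h1 := samp_lemma p hp0 hp1 T f hsub
    nlinarith [hnn (∅ : Finset (Fin n))]
  have hmain : p * exV x f ≤ exV q f := by
    calc p * exV x f = ∑ T : Finset (Fin n), prodP x T * (p * f T) := by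
          unfold exV
          rw [Finset.mul_sum]
          exact Finset.sum_congr rfl (fun T _ => by ring)
      _ ≤ ∑ T : Finset (Fin n),
            prodP x T * ∑ R ∈ T.powerset, p ^ R.card * (1 - p) ^ (T \ R).card * f R :=
          Finset.sum_le_sum (fun T _ => mul_le_mul_of_nonneg_left (hlb T) (hPnn T))
      _ = ∑ R : Finset (Fin n), prodP (fun i => p * x i) R * f R := hts
      _ = exV q f := by unfold exV; rw [hqx]
  exact hmain
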